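/- Let α ∈ (0,2) and let (λ_k)_{k≥1} be a nondecreasing sequence of strictly positive real numbers with ∑_{k=1}^∞ 1/λ_k < ∞. Then ∫₀^∞ ( ∑_{k=1}^∞ e^{−2λ_k s} )^{α/2} ds ≤ ( (2−α)/(α λ_1) )^{(2−α)/2} ( ∑_{k=1}^∞ 1/λ_k )^{α/2}; in particular this integral is finite. -/

import Mathlib

open MeasureTheory Filter Topology
open scoped ENNReal

lemma lint_exp {c : ℝ} (hc : 0 < c) :
    (∫⁻ x in Set.Ioi (0:ℝ), ENNReal.ofReal (Real.exp (-(c * x))))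
      = ENNReal.ofReal (1 / c) := by
  rw [← ofReal_integral_eq_lintegral_ofReal]
  · congr 1
    have h := integral_comp_mul_left_Ioi (fun x => Real.exp (-x)) 0 hc
    simp only [mul_zero, smul_eq_mul] at h
    rw [h, integral_exp_neg_Ioi_zero, mul_one, one_div]
  · exact (by simpa [neg_mul] using exp_neg_integrableOn_Ioi 0 hc :
      IntegrableOn (fun x => Real.exp (-(c * x))) (Set.Ioi 0))
  · exact ae_of_all _ fun x => (Real.exp_pos _).le

/-- For `α ∈ (0,2)` and a nondecreasing sequence `(λ_k)` of strictly positive numbers with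
`∑ 1/λ_k < ∞` (the sequence is indexed by `ℕ`, with `λ_1` corresponding to `lam 0`):
`∫₀^∞ (∑_k e^{-2λ_k s})^{α/2} ds ≤ ((2-α)/(α λ_1))^{(2-α)/2} (∑_k 1/λ_k)^{α/2}`;
in particular, the integral is finite. -/
theorem stmt10
    (α : ℝ) (hα0 : 0 < α) (hα2 : α < 2)
    (lam : ℕ → ℝ) (hpos : ∀ k, 0 < lam k) (hmono : Monotone lam)
    (hsum : Summable fun k => 1 / lam k) :
    (∫⁻ s in Set.Ioi (0 : ℝ),
        ENNReal.ofReal ((∑' k : ℕ, Real.exp (-(2 * lam k * s))) ^ (α / 2)))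
      ≤ ENNReal.ofReal (((2 - α) / (α * lam 0)) ^ ((2 - α) / 2)
          * (∑' k : ℕ, 1 / lam k) ^ (α / 2))
    ∧ (∫⁻ s in Set.Ioi (0 : ℝ),
        ENNReal.ofReal ((∑' k : ℕ, Real.exp (-(2 * lam k * s))) ^ (α / 2))) < ⊤ := by
  have hl0 : 0 < lam 0 := hpos 0
  have hα2' : (0:ℝ) < 2 - α := by linarith
  set F : ℝ → ℝ≥0∞ := fun s => ∑' k : ℕ, ENNReal.ofReal (Real.exp (-(2 * lam k * s))) with hF
  have hFmeas : Measurable F :=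
    Measurable.ennreal_tsum fun k => ((measurable_id.const_mul (2 * lam k)).neg.exp).ennreal_ofReal
  set G : ℝ → ℝ≥0∞ := fun s => F s * ENNReal.ofReal (Real.exp (lam 0 * s)) with hG
  have hGmeas : Measurable G :=
    hFmeas.mul ((measurable_id.const_mul (lam 0)).exp.ennreal_ofReal)
  -- Step 1: rewrite the integrand
  have step1 :
      (∫⁻ s in Set.Ioi (0 : ℝ),
          ENNReal.ofReal ((∑' k : ℕ, Real.exp (-(2 * lam k * s))) ^ (α / 2)))
        = ∫⁻ s in Set.Ioi (0 : ℝ),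
            (fun s => (G s) ^ (α / 2)) s
              * (fun s => (ENNReal.ofReal (Real.exp (-(lam 0 * s)))) ^ (α / 2)) s := by
    refine setLIntegral_congr_fun measurableSet_Ioi (fun s hs => ?_)
    have hs0 : (0:ℝ) < s := hs
    have hsummable : Summable fun k => Real.exp (-(2 * lam k * s)) := by
      refine Summable.of_nonneg_of_le (fun k => (Real.exp_pos _).le)
        (fun k => ?_) (hsum.mul_left (1 / (2 * s)))
      have hx : 0 < 2 * lam k * s := mul_pos (mul_pos two_pos (hpos k)) hs0
      calc Real.exp (-(2 * lam k * s)) ≤ 1 / (2 * lam k * s) := by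
            rw [Real.exp_neg, one_div]
            exact inv_anti₀ hx (by linarith [Real.add_one_le_exp (2 * lam k * s)])
        _ = 1 / (2 * s) * (1 / lam k) := by
            rw [div_mul_div_comm, one_mul]; ring_nf
    have h1 : ENNReal.ofReal ((∑' k : ℕ, Real.exp (-(2 * lam k * s))) ^ (α / 2))
        = (F s) ^ (α / 2) := by
      rw [← ENNReal.ofReal_rpow_of_nonneg (tsum_nonneg fun k => (Real.exp_pos _).le)
        (by positivity), ENNReal.ofReal_tsum_of_nonneg (fun k => (Real.exp_pos _).le) hsummable]
    have h2 : F s = G s * ENNReal.ofReal (Real.exp (-(lam 0 * s))) := by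
      rw [hG, mul_assoc, ← ENNReal.ofReal_mul (Real.exp_pos _).le, ← Real.exp_add]
      simp
    rw [h1, h2, ENNReal.mul_rpow_of_nonneg _ _ (by positivity)]
  rw [step1]
  -- Step 2: Hölder's inequality
  have hpq : Real.HolderConjugate (2 / α) (2 / (2 - α)) := by
    constructor
    · rw [inv_div, inv_div, inv_one]; ring
    · positivity
    · positivity
  have hmeas1 : AEMeasurable (fun s => (G s) ^ (α / 2))
      (volume.restrict (Set.Ioi (0:ℝ))) := (hGmeas.pow_const _).aemeasurable
  have hmeas2 : AEMeasurable (fun s => (ENNReal.ofReal (Real.exp (-(lam 0 * s)))) ^ (α / 2))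
      (volume.restrict (Set.Ioi (0:ℝ))) :=
    (((measurable_id.const_mul (lam 0)).neg.exp.ennreal_ofReal).pow_const _).aemeasurable
  have holder := ENNReal.lintegral_mul_le_Lp_mul_Lq
    (volume.restrict (Set.Ioi (0:ℝ))) hpq hmeas1 hmeas2
  -- Step 3: compute/bound the first factor
  have hGint : (∫⁻ s in Set.Ioi (0:ℝ), ((G s) ^ (α / 2)) ^ (2 / α))
      ≤ ENNReal.ofReal (∑' k : ℕ, 1 / lam k) := by
    have e1 : ∀ s : ℝ, ((G s) ^ (α / 2)) ^ (2 / α) = G s := fun s => by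
      rw [← ENNReal.rpow_mul]
      rw [show (α / 2) * (2 / α) = 1 by field_simp, ENNReal.rpow_one]
    simp_rw [e1]
    have e2 : ∀ s : ℝ, G s = ∑' k : ℕ,
        ENNReal.ofReal (Real.exp (-((2 * lam k - lam 0) * s))) := fun s => by
      have hterm : ∀ k : ℕ, ENNReal.ofReal (Real.exp (-(2 * lam k * s)))
          * ENNReal.ofReal (Real.exp (lam 0 * s))
          = ENNReal.ofReal (Real.exp (-((2 * lam k - lam 0) * s))) := fun k => by
        rw [← ENNReal.ofReal_mul (Real.exp_pos _).le, ← Real.exp_add]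
        congr 2; ring
      calc G s = ∑' k : ℕ, ENNReal.ofReal (Real.exp (-(2 * lam k * s)))
            * ENNReal.ofReal (Real.exp (lam 0 * s)) := ENNReal.tsum_mul_right.symm
        _ = _ := tsum_congr hterm
    simp_rw [e2]
    rw [lintegral_tsum fun k => by fun_prop]
    have hck : ∀ k, 0 < 2 * lam k - lam 0 := fun k => by
      have := hmono (Nat.zero_le k); have := hpos k; linarith
    calc (∑' k : ℕ, ∫⁻ s in Set.Ioi (0:ℝ),
            ENNReal.ofReal (Real.exp (-((2 * lam k - lam 0) * s))))
        = ∑' k : ℕ, ENNReal.ofReal (1 / (2 * lam k - lam 0)) := by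
          congr 1; funext k; exact lint_exp (hck k)
      _ ≤ ∑' k : ℕ, ENNReal.ofReal (1 / lam k) := by
          refine ENNReal.tsum_le_tsum fun k => ENNReal.ofReal_le_ofReal ?_
          have := hmono (Nat.zero_le k); have := hpos k
          exact one_div_le_one_div_of_le (hpos k) (by linarith)
      _ = ENNReal.ofReal (∑' k : ℕ, 1 / lam k) :=
          (ENNReal.ofReal_tsum_of_nonneg (fun k => (one_div_pos.mpr (hpos k)).le) hsum).symm
  -- Step 4: compute the second factor
  have hexp2 : (∫⁻ s in Set.Ioi (0:ℝ),
      ((ENNReal.ofReal (Real.exp (-(lam 0 * s)))) ^ (α / 2)) ^ (2 / (2 - α)))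
      = ENNReal.ofReal ((2 - α) / (α * lam 0)) := by
    have e1 : ∀ s : ℝ, ((ENNReal.ofReal (Real.exp (-(lam 0 * s)))) ^ (α / 2)) ^ (2 / (2 - α))
        = ENNReal.ofReal (Real.exp (-((lam 0 * (α / (2 - α))) * s))) := fun s => by
      rw [← ENNReal.rpow_mul,
        ENNReal.ofReal_rpow_of_nonneg (Real.exp_pos _).le (by positivity),
        ← Real.exp_mul]
      congr 1
      ring
    simp_rw [e1]
    rw [lint_exp (by positivity)]
    rw [show lam 0 * (α / (2 - α)) = α * lam 0 / (2 - α) by ring, one_div_div]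
  have hbound : (∫⁻ s in Set.Ioi (0:ℝ), ((G s) ^ (α / 2)) ^ (2 / α)) ^ (1 / (2 / α))
      * (∫⁻ s in Set.Ioi (0:ℝ),
          ((ENNReal.ofReal (Real.exp (-(lam 0 * s)))) ^ (α / 2)) ^ (2 / (2 - α)))
        ^ (1 / (2 / (2 - α)))
      ≤ (ENNReal.ofReal (∑' k : ℕ, 1 / lam k)) ^ (α / 2)
        * (ENNReal.ofReal ((2 - α) / (α * lam 0))) ^ ((2 - α) / 2) := by
    rw [show 1 / (2 / α) = α / 2 from one_div_div _ _,
      show 1 / (2 / (2 - α)) = (2 - α) / 2 from one_div_div _ _]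
    exact mul_le_mul'
      (ENNReal.rpow_le_rpow hGint (show (0:ℝ) ≤ α / 2 by linarith))
      (ENNReal.rpow_le_rpow hexp2.le (show (0:ℝ) ≤ (2 - α) / 2 by linarith))
  have hfinal : (ENNReal.ofReal (∑' k : ℕ, 1 / lam k)) ^ (α / 2)
      * (ENNReal.ofReal ((2 - α) / (α * lam 0))) ^ ((2 - α) / 2)
      = ENNReal.ofReal (((2 - α) / (α * lam 0)) ^ ((2 - α) / 2)
          * (∑' k : ℕ, 1 / lam k) ^ (α / 2)) := by
    rw [ENNReal.ofReal_rpow_of_nonneg (tsum_nonneg fun k => (one_div_pos.mpr (hpos k)).le)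
        (by linarith),
      ENNReal.ofReal_rpow_of_nonneg (le_of_lt (div_pos hα2' (mul_pos hα0 hl0))) (by linarith),
      ← ENNReal.ofReal_mul (Real.rpow_nonneg
        (tsum_nonneg fun k => (one_div_pos.mpr (hpos k)).le) _), mul_comm]
  refine ⟨holder.trans (hbound.trans hfinal.le), lt_of_le_of_lt (holder.trans hbound) ?_⟩
  exact ENNReal.mul_lt_top
    (ENNReal.rpow_lt_top_of_nonneg (by linarith) ENNReal.ofReal_ne_top)
    (ENNReal.rpow_lt_top_of_nonneg (by linarith) ENNReal.ofReal_ne_top)
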